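/- Let w > 0, γ > 0, λᵢ ≥ 0, and hⱼ ∈ ℂᴹ for j = 1,…,K. Define Σ = Σⱼ λⱼ hⱼ hⱼᴴ + w I (which is positive definite). Then the matrix inequality w I + Σ_{j ≠ i} λⱼ hⱼ hⱼᴴ ⪰ (λᵢ/γ) hᵢ hᵢᴴ holds if and only if λᵢ (1 + 1/γ) · hᵢᴴ Σ⁻¹ hᵢ ≤ 1. -/

import Mathlib

open Matrix ComplexOrder

private lemma vmv_herm {M : ℕ} (v : Fin M → ℂ) : (vecMulVec v (star v)).IsHermitian := by
  ext k l; simp [vecMulVec, conjTranspose, IsHermitian, mul_comm]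

private lemma vmv_mulVec {M : ℕ} (v x : Fin M → ℂ) :
    (vecMulVec v (star v)) *ᵥ x = (star v ⬝ᵥ x) • v := by
  ext k; simp [vecMulVec, mulVec, dotProduct, Finset.mul_sum, mul_comm, mul_assoc, mul_left_comm]

private lemma real_smul_mat {M : ℕ} (c : ℝ) (A : Matrix (Fin M) (Fin M) ℂ) :
    c • A = (c : ℂ) • A := by
  ext k l; simp [Complex.real_smul]

private lemma star_dp {M : ℕ} (v x : Fin M → ℂ) : star x ⬝ᵥ v = star (star v ⬝ᵥ x) :=
  star_dotProduct x v

open scoped InnerProductSpace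

private lemma vmv_psd {M : ℕ} {c : ℝ} (hc : 0 ≤ c) (v : Fin M → ℂ) :
    (c • vecMulVec v (star v)).PosSemidef := by
  rw [real_smul_mat]
  rw [posSemidef_iff_dotProduct_mulVec]
  constructor
  · rw [IsHermitian, conjTranspose_smul, (vmv_herm v).eq]
    simp
  · intro x
    rw [smul_mulVec, dotProduct_smul, vmv_mulVec, dotProduct_smul, smul_eq_mul,
      smul_eq_mul, star_dp v x]
    exact mul_nonneg (Complex.zero_le_real.mpr hc) (mul_star_self_nonneg _)

private lemma key_lemma {M : ℕ} {S : Matrix (Fin M) (Fin M) ℂ} (hS : S.PosDef) {c : ℝ}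
    (hc : 0 ≤ c) (v : Fin M → ℂ) :
    (S - c • vecMulVec v (star v)).PosSemidef ↔ c * (star v ⬝ᵥ S⁻¹ *ᵥ v).re ≤ 1 := by
  have hq : (0 : ℂ) ≤ star v ⬝ᵥ S⁻¹ *ᵥ v := hS.inv.posSemidef.dotProduct_mulVec_nonneg v
  set q : ℂ := star v ⬝ᵥ S⁻¹ *ᵥ v with hqdef
  obtain ⟨hq0, hqim⟩ := Complex.nonneg_iff.mp hq
  have hqre : (q.re : ℂ) = q := Complex.ext rfl (by simp [← hqim])
  have hdet : IsUnit S.det := (Matrix.isUnit_iff_isUnit_det S).mp hS.isUnit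
  set u := S⁻¹ *ᵥ v with hudef
  have hSu : S *ᵥ u = v := by
    rw [hudef, mulVec_mulVec, mul_nonsing_inv _ hdet, one_mulVec]
  have hux : ∀ x, star u ⬝ᵥ S *ᵥ x = star v ⬝ᵥ x := by
    intro x
    show star (S⁻¹ *ᵥ v) ⬝ᵥ S *ᵥ x = star v ⬝ᵥ x
    rw [star_mulVec, ← dotProduct_mulVec, hS.inv.isHermitian.eq, mulVec_mulVec,
      nonsing_inv_mul _ hdet, one_mulVec]
  have expand : ∀ x, star x ⬝ᵥ (S - c • vecMulVec v (star v)) *ᵥ x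
      = star x ⬝ᵥ S *ᵥ x - (c : ℂ) * ((star v ⬝ᵥ x) * (star x ⬝ᵥ v)) := by
    intro x
    rw [real_smul_mat, sub_mulVec, dotProduct_sub, smul_mulVec, dotProduct_smul,
      vmv_mulVec, dotProduct_smul]
    simp [smul_eq_mul, mul_assoc]
  constructor
  · intro hpsd
    have h0 := hpsd.dotProduct_mulVec_nonneg u
    have h2 : star u ⬝ᵥ v = q := by rw [← hSu, hux u, ← hqdef]
    rw [expand u, hux u, h2, ← hqdef, ← hqre] at h0
    have h1 : (0 : ℂ) ≤ ((q.re - c * q.re ^ 2 : ℝ) : ℂ) := by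
      convert h0 using 1
      push_cast
      ring
    rw [Complex.zero_le_real] at h1
    rcases eq_or_lt_of_le hq0 with h | h
    · rw [← h]; norm_num
    · nlinarith
  · intro hle
    rw [posSemidef_iff_dotProduct_mulVec]
    constructor
    · refine hS.isHermitian.sub ?_
      rw [real_smul_mat, IsHermitian, conjTranspose_smul, (vmv_herm v).eq]
      simp
    · intro x
      rw [expand x]
      set d := star v ⬝ᵥ x with hddef
      have hds : d * star d = (Complex.normSq d : ℂ) := by
        rw [Complex.star_def]; exact Complex.mul_conj d
      rw [star_dp v x, ← hddef, hds]
      have hsx : (0 : ℂ) ≤ star x ⬝ᵥ S *ᵥ x := hS.posSemidef.dotProduct_mulVec_nonneg x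
      obtain ⟨hsx0, hsxim⟩ := Complex.nonneg_iff.mp hsx
      rw [Complex.nonneg_iff]
      refine ⟨?_, by simp [Complex.sub_im, Complex.mul_im, ← hsxim]⟩
      simp only [Complex.sub_re, Complex.mul_re, Complex.ofReal_re, Complex.ofReal_im,
        zero_mul, sub_zero, mul_zero]
      rw [sub_nonneg]
      -- Cauchy-Schwarz part
      obtain ⟨B, hB⟩ : ∃ B : Matrix (Fin M) (Fin M) ℂ, S = Bᴴ * B := by
        open scoped MatrixOrder in
        exact CStarAlgebra.nonneg_iff_eq_star_mul_self.mp hS.posSemidef.nonneg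
      have key2 : ∀ y z : Fin M → ℂ, star y ⬝ᵥ S *ᵥ z = star (B *ᵥ y) ⬝ᵥ (B *ᵥ z) := by
        intro y z
        rw [hB, star_mulVec, ← dotProduct_mulVec, mulVec_mulVec]
      set a : EuclideanSpace ℂ (Fin M) := (WithLp.equiv 2 _).symm (B *ᵥ u) with hadef
      set b : EuclideanSpace ℂ (Fin M) := (WithLp.equiv 2 _).symm (B *ᵥ x) with hbdef
      have hab : ⟪a, b⟫_ℂ = d := by
        rw [EuclideanSpace.inner_eq_star_dotProduct]
        simp only [hadef, hbdef, Equiv.apply_symm_apply, WithLp.equiv_symm_apply, WithLp.ofLp_toLp]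
        rw [dotProduct_comm, ← key2, hux]
      have haa : ‖a‖ ^ 2 = q.re := by
        rw [← inner_self_eq_norm_sq (𝕜 := ℂ)]
        rw [EuclideanSpace.inner_eq_star_dotProduct]
        simp only [hadef, Equiv.apply_symm_apply, WithLp.equiv_symm_apply, WithLp.ofLp_toLp]
        rw [dotProduct_comm, ← key2, hux, RCLike.re_to_complex, ← hqdef]
      have hbb : ‖b‖ ^ 2 = (star x ⬝ᵥ S *ᵥ x).re := by
        rw [← inner_self_eq_norm_sq (𝕜 := ℂ)]
        rw [EuclideanSpace.inner_eq_star_dotProduct]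
        simp only [hbdef, Equiv.apply_symm_apply, WithLp.equiv_symm_apply, WithLp.ofLp_toLp]
        rw [dotProduct_comm, ← key2, RCLike.re_to_complex]
      have hcs := norm_inner_le_norm (𝕜 := ℂ) a b
      rw [hab] at hcs
      have hnd : Complex.normSq d = ‖d‖ ^ 2 := by
        rw [Complex.normSq_eq_norm_sq]
      rw [hnd, ← hbb]
      have hca : c * ‖a‖ ^ 2 ≤ 1 := by rw [haa]; exact hle
      nlinarith [norm_nonneg d, norm_nonneg a, norm_nonneg b, sq_nonneg ‖b‖,
        mul_le_mul hcs hcs (norm_nonneg d) (mul_nonneg (norm_nonneg a) (norm_nonneg b))]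

theorem stmt_11 {M K : ℕ} (w γ : ℝ) (hw : 0 < w) (hγ : 0 < γ)
    (lam : Fin K → ℝ) (hlam : ∀ j, 0 ≤ lam j)
    (h : Fin K → Fin M → ℂ) (i : Fin K)
    (S : Matrix (Fin M) (Fin M) ℂ)
    (hS : S = ∑ j, lam j • vecMulVec (h j) (star (h j)) + w • (1 : Matrix (Fin M) (Fin M) ℂ)) :
    ((w • (1 : Matrix (Fin M) (Fin M) ℂ) +
        ∑ j ∈ Finset.univ.erase i, lam j • vecMulVec (h j) (star (h j))) -
      (lam i / γ) • vecMulVec (h i) (star (h i))).PosSemidef ↔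
      lam i * (1 + 1 / γ) * (star (h i) ⬝ᵥ S⁻¹ *ᵥ h i).re ≤ 1 := by
  have hSpd : S.PosDef := by
    rw [hS]
    refine Matrix.PosDef.posSemidef_add ?_ ?_
    · refine Finset.sum_induction _ (fun A : Matrix (Fin M) (Fin M) ℂ => A.PosSemidef)
        (fun A B hA hB => Matrix.PosSemidef.add hA hB) Matrix.PosSemidef.zero ?_
      intro j _
      exact vmv_psd (hlam j) (h j)
    · rw [real_smul_mat, Matrix.smul_one_eq_diagonal]
      refine Matrix.PosDef.diagonal ?_
      intro _
      exact_mod_cast Complex.real_lt_real.mpr hw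
  have hmul : (lam i * (1 + 1 / γ)) • vecMulVec (h i) (star (h i))
      = lam i • vecMulVec (h i) (star (h i)) + (lam i / γ) • vecMulVec (h i) (star (h i)) := by
    rw [← add_smul]
    ring_nf
  have hmat : (w • (1 : Matrix (Fin M) (Fin M) ℂ) +
        ∑ j ∈ Finset.univ.erase i, lam j • vecMulVec (h j) (star (h j))) -
      (lam i / γ) • vecMulVec (h i) (star (h i))
      = S - (lam i * (1 + 1 / γ)) • vecMulVec (h i) (star (h i)) := by
    rw [hS, ← Finset.sum_erase_add _ _ (Finset.mem_univ i), hmul]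
    abel
  rw [hmat]
  exact key_lemma hSpd (mul_nonneg (hlam i) (by positivity)) (h i)
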